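/- arXiv:2309.05988 — 3 statements merged into one kernel-verified Lean document; each statement's English description precedes it below -/
import Mathlib

section
/- Let S be a separable metric space and (μ_n), (μ'_n) sequences of Borel probability measures on S converging weakly to μ and μ' respectively. Then the product measures μ_n × μ'_n converge weakly to μ × μ' on S × S. -/
open Filter MeasureTheory BoundedContinuousFunction Set Metric Topology
open scoped NNReal ENNReal

set_option linter.unusedSectionVars false
namespace ProdWeakAux

variable {S : Type*} [MetricSpace S] [TopologicalSpace.SeparableSpace S]
    [MeasurableSpace S] [BorelSpace S]

/-- The union of the rectangles recorded in a list. -/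
def rectUnion (L : List (Set S × Set S)) : Set (S × S) :=
  L.foldr (fun p s => p.1 ×ˢ p.2 ∪ s) ∅

@[simp] lemma rectUnion_nil : rectUnion ([] : List (Set S × Set S)) = ∅ := rfl

@[simp] lemma rectUnion_cons (p : Set S × Set S) (L : List (Set S × Set S)) :
    rectUnion (p :: L) = p.1 ×ˢ p.2 ∪ rectUnion L := rfl

lemma measurableSet_rectUnion (L : List (Set S × Set S))
    (hL : ∀ p ∈ L, IsOpen p.1 ∧ IsOpen p.2) : MeasurableSet (rectUnion L) := by
  induction L with
  | nil => simp
  | cons p L ih =>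
      rw [rectUnion_cons]
      exact (((hL p (by simp)).1.measurableSet).prod ((hL p (by simp)).2.measurableSet)).union
        (ih fun q hq => hL q (by simp [hq]))

lemma rect_inter_rectUnion (A B : Set S) (L : List (Set S × Set S)) :
    (A ×ˢ B) ∩ rectUnion L = rectUnion (L.map fun q => (A ∩ q.1, B ∩ q.2)) := by
  induction L with
  | nil => simp [rectUnion]
  | cons p L ih =>
      simp only [rectUnion_cons, List.map_cons, inter_union_distrib_left, ih,
        Set.prod_inter_prod]

lemma rectUnion_append (L₁ L₂ : List (Set S × Set S)) :
    rectUnion (L₁ ++ L₂) = rectUnion L₁ ∪ rectUnion L₂ := by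
  induction L₁ with
  | nil => simp
  | cons p L ih => simp [rectUnion_cons, ih, Set.union_assoc]

lemma rectUnion_map_range (g : ℕ → Set S × Set S) (k : ℕ) :
    rectUnion ((List.range k).map g) = ⋃ i ∈ Finset.range k, (g i).1 ×ˢ (g i).2 := by
  induction k with
  | zero => simp
  | succ n ih =>
      rw [List.range_succ, List.map_append, rectUnion_append, ih]
      simp [Finset.range_add_one, Set.biUnion_insert, rectUnion, Set.union_comm]

/-- Key convergence lemma: the product measures of a finite union of continuity rectangles
converge. -/
lemma tendsto_rectUnion
    (μn μ'n : ℕ → Measure S) (μ μ' : Measure S)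
    [∀ n, IsProbabilityMeasure (μn n)] [∀ n, IsProbabilityMeasure (μ'n n)]
    [IsProbabilityMeasure μ] [IsProbabilityMeasure μ']
    (hA : ∀ A : Set S, IsOpen A → μ (frontier A) = 0 →
        Tendsto (fun n => μn n A) atTop (𝓝 (μ A)))
    (hB : ∀ B : Set S, IsOpen B → μ' (frontier B) = 0 →
        Tendsto (fun n => μ'n n B) atTop (𝓝 (μ' B))) :
    ∀ (k : ℕ) (L : List (Set S × Set S)), L.length ≤ k →
      (∀ p ∈ L, (IsOpen p.1 ∧ μ (frontier p.1) = 0) ∧ (IsOpen p.2 ∧ μ' (frontier p.2) = 0)) →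
      Tendsto (fun n => (μn n).prod (μ'n n) (rectUnion L)) atTop
        (𝓝 (μ.prod μ' (rectUnion L))) := by
  intro k
  induction k with
  | zero =>
      intro L hlen _
      have : L = [] := List.eq_nil_of_length_eq_zero (Nat.le_zero.mp hlen)
      subst this
      simp only [rectUnion_nil, measure_empty]
      exact tendsto_const_nhds
  | succ k ih =>
      intro L hlen hL
      match L with
      | [] =>
          simp only [rectUnion_nil, measure_empty]
          exact tendsto_const_nhds
      | p :: L =>
          obtain ⟨⟨hpo1, hpn1⟩, hpo2, hpn2⟩ := hL p (by simp)
          have hLtail : ∀ q ∈ L, (IsOpen q.1 ∧ μ (frontier q.1) = 0) ∧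
              (IsOpen q.2 ∧ μ' (frontier q.2) = 0) := fun q hq => hL q (by simp [hq])
          set L' : List (Set S × Set S) := L.map fun q => (p.1 ∩ q.1, p.2 ∩ q.2) with hL'def
          have hL' : ∀ q ∈ L', (IsOpen q.1 ∧ μ (frontier q.1) = 0) ∧
              (IsOpen q.2 ∧ μ' (frontier q.2) = 0) := by
            intro q hq
            rw [hL'def, List.mem_map] at hq
            obtain ⟨r, hr, rfl⟩ := hq
            obtain ⟨⟨hro1, hrn1⟩, hro2, hrn2⟩ := hLtail r hr
            refine ⟨⟨hpo1.inter hro1, ?_⟩, hpo2.inter hro2, ?_⟩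
            · exact measure_mono_null (frontier_inter_subset _ _)
                (measure_union_null (measure_mono_null Set.inter_subset_left hpn1)
                  (measure_mono_null Set.inter_subset_right hrn1))
            · exact measure_mono_null (frontier_inter_subset _ _)
                (measure_union_null (measure_mono_null Set.inter_subset_left hpn2)
                  (measure_mono_null Set.inter_subset_right hrn2))
          have hlenL : L.length ≤ k := by simpa using Nat.succ_le_succ_iff.mp hlen
          have hlenL' : L'.length ≤ k := by simpa [hL'def] using hlenL
          have hmeasL : MeasurableSet (rectUnion L) :=
            measurableSet_rectUnion L fun q hq => ⟨(hLtail q hq).1.1, (hLtail q hq).2.1⟩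
          -- the measure identity
          have key : ∀ (ρ ρ' : Measure S) [IsProbabilityMeasure ρ] [IsProbabilityMeasure ρ'],
              ρ.prod ρ' (rectUnion (p :: L)) =
                ρ p.1 * ρ' p.2 + ρ.prod ρ' (rectUnion L) - ρ.prod ρ' (rectUnion L') := by
            intro ρ ρ' _ _
            have h0 := measure_union_add_inter (μ := ρ.prod ρ') (p.1 ×ˢ p.2) hmeasL
            rw [rect_inter_rectUnion, ← hL'def] at h0
            rw [rectUnion_cons]
            have := ENNReal.eq_sub_of_add_eq (measure_ne_top (ρ.prod ρ') _) h0
            rw [this, Measure.prod_prod]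
          have t1 : Tendsto (fun n => μn n p.1 * μ'n n p.2) atTop (𝓝 (μ p.1 * μ' p.2)) :=
            ENNReal.Tendsto.mul (hA p.1 hpo1 hpn1) (Or.inr (measure_ne_top μ' p.2))
              (hB p.2 hpo2 hpn2) (Or.inr (measure_ne_top μ p.1))
          have t2 := ih L hlenL hLtail
          have t3 := ih L' hlenL' hL'
          have tall : Tendsto
              (fun n => μn n p.1 * μ'n n p.2 + (μn n).prod (μ'n n) (rectUnion L)
                - (μn n).prod (μ'n n) (rectUnion L')) atTop
              (𝓝 (μ p.1 * μ' p.2 + μ.prod μ' (rectUnion L) - μ.prod μ' (rectUnion L'))) := by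
            refine ENNReal.Tendsto.sub (t1.add t2) t3 (Or.inr (measure_ne_top _ _))
          refine Tendsto.congr (fun n => (key (μn n) (μ'n n)).symm) ?_
          rw [key μ μ']
          exact tall

end ProdWeakAux

open ProdWeakAux

/-- Weak convergence of product measures: if `μₙ → μ` and `μ'ₙ → μ'` weakly on a
separable metric space `S`, then `μₙ × μ'ₙ → μ × μ'` weakly on `S × S`. -/
theorem prod_tendsto_of_tendsto
    {S : Type*} [MetricSpace S] [TopologicalSpace.SeparableSpace S]
    [MeasurableSpace S] [BorelSpace S]
    (μn μ'n : ℕ → Measure S) (μ μ' : Measure S)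
    [∀ n, IsProbabilityMeasure (μn n)] [∀ n, IsProbabilityMeasure (μ'n n)]
    [IsProbabilityMeasure μ] [IsProbabilityMeasure μ']
    (h1 : ∀ f : S →ᵇ ℝ, Tendsto (fun n => ∫ x, f x ∂(μn n)) atTop (nhds (∫ x, f x ∂μ)))
    (h2 : ∀ f : S →ᵇ ℝ, Tendsto (fun n => ∫ x, f x ∂(μ'n n)) atTop (nhds (∫ x, f x ∂μ'))) :
    ∀ g : S × S →ᵇ ℝ,
      Tendsto (fun n => ∫ x, g x ∂((μn n).prod (μ'n n))) atTop
        (nhds (∫ x, g x ∂(μ.prod μ'))) := by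
  classical
  haveI : SecondCountableTopology S := UniformSpace.secondCountable_of_separable S
  -- package as probability measures
  let P : ℕ → ProbabilityMeasure S := fun n => ⟨μn n, inferInstance⟩
  let P' : ℕ → ProbabilityMeasure S := fun n => ⟨μ'n n, inferInstance⟩
  let Pl : ProbabilityMeasure S := ⟨μ, inferInstance⟩
  let Pl' : ProbabilityMeasure S := ⟨μ', inferInstance⟩
  have hP : Tendsto P atTop (𝓝 Pl) :=
    ProbabilityMeasure.tendsto_iff_forall_integral_tendsto.mpr h1
  have hP' : Tendsto P' atTop (𝓝 Pl') :=
    ProbabilityMeasure.tendsto_iff_forall_integral_tendsto.mpr h2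
  have hA : ∀ A : Set S, IsOpen A → μ (frontier A) = 0 →
      Tendsto (fun n => μn n A) atTop (𝓝 (μ A)) := fun A _ hnull =>
    ProbabilityMeasure.tendsto_measure_of_null_frontier_of_tendsto' hP hnull
  have hB : ∀ B : Set S, IsOpen B → μ' (frontier B) = 0 →
      Tendsto (fun n => μ'n n B) atTop (𝓝 (μ' B)) := fun B _ hnull =>
    ProbabilityMeasure.tendsto_measure_of_null_frontier_of_tendsto' hP' hnull
  -- the liminf condition on open sets of the product
  have h_opens : ∀ G : Set (S × S), IsOpen G →
      μ.prod μ' G ≤ atTop.liminf (fun n => (μn n).prod (μ'n n) G) := by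
    intro G hG
    rcases G.eq_empty_or_nonempty with rfl | hGne
    · simp
    -- every point of G has a continuity-rectangle neighborhood inside G
    have key : ∀ z : S × S, z ∈ G → ∃ A B : Set S,
        IsOpen A ∧ IsOpen B ∧ μ (frontier A) = 0 ∧ μ' (frontier B) = 0 ∧
          z ∈ A ×ˢ B ∧ A ×ˢ B ⊆ G := by
      rintro ⟨x, y⟩ hz
      obtain ⟨ε, hε, hball⟩ := Metric.isOpen_iff.mp hG (x, y) hz
      obtain ⟨r, hr, hrnull⟩ := exists_null_frontier_thickening μ {x} hε
      obtain ⟨r', hr', hrnull'⟩ := exists_null_frontier_thickening μ' {y} hε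
      rw [Metric.thickening_singleton] at hrnull
      rw [Metric.thickening_singleton] at hrnull'
      refine ⟨ball x r, ball y r', isOpen_ball, isOpen_ball, hrnull, hrnull', ?_, ?_⟩
      · exact ⟨mem_ball_self hr.1, mem_ball_self hr'.1⟩
      · intro w hw
        apply hball
        rw [← ball_prod_same]
        exact ⟨ball_subset_ball hr.2.le hw.1, ball_subset_ball hr'.2.le hw.2⟩
    have key' := fun (i : G) => key i i.2
    choose A B hAo hBo hAn hBn hmem hsub using key'
    set s : G → Set (S × S) := fun i => A i ×ˢ B i with hs
    have hsopen : ∀ i, IsOpen (s i) := fun i => (hAo i).prod (hBo i)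
    have hsUnion : ⋃ i, s i = G := by
      apply subset_antisymm
      · exact Set.iUnion_subset fun i => hsub i
      · intro z hz
        exact Set.mem_iUnion.mpr ⟨⟨z, hz⟩, hmem ⟨z, hz⟩⟩
    obtain ⟨T, hTc, hTU⟩ := TopologicalSpace.isOpen_iUnion_countable s hsopen
    have hTne : T.Nonempty := by
      rcases hGne with ⟨z, hz⟩
      rw [← hsUnion, ← hTU] at hz
      obtain ⟨i, hiT, -⟩ := Set.mem_iUnion₂.mp hz
      exact ⟨i, hiT⟩
    obtain ⟨f, hf⟩ := hTc.exists_eq_range hTne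
    have hGU : G = ⋃ n : ℕ, s (f n) := by
      rw [← hsUnion, ← hTU, hf, Set.biUnion_range]
    -- partial unions
    set V : ℕ → Set (S × S) := fun k => ⋃ i ∈ Finset.range k, s (f i) with hV
    have hVmono : Monotone V := by
      intro a b hab
      apply Set.biUnion_subset_biUnion_left
      intro i hi
      exact Finset.mem_range.mpr (lt_of_lt_of_le (Finset.mem_range.mp hi) hab)
    have hVUnion : ⋃ k, V k = G := by
      rw [hGU]
      apply subset_antisymm
      · exact Set.iUnion_subset fun k => Set.iUnion₂_subset fun i _ =>
          Set.subset_iUnion (fun n => s (f n)) i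
      · intro z hz
        obtain ⟨n, hn⟩ := Set.mem_iUnion.mp hz
        exact Set.mem_iUnion.mpr ⟨n + 1, Set.mem_biUnion (Finset.self_mem_range_succ n) hn⟩
    have hVtendsto : Tendsto (fun k => μ.prod μ' (V k)) atTop (𝓝 (μ.prod μ' G)) := by
      have := tendsto_measure_iUnion_atTop (μ := μ.prod μ') hVmono
      rwa [hVUnion] at this
    -- each partial union's measure is below the liminf
    have hVle : ∀ k, μ.prod μ' (V k) ≤ atTop.liminf (fun n => (μn n).prod (μ'n n) G) := by
      intro k
      have hrect : V k = rectUnion (((List.range k).map fun i => (A (f i), B (f i)))) := by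
        rw [rectUnion_map_range]
      have hprops : ∀ p ∈ (List.range k).map fun i => (A (f i), B (f i)),
          (IsOpen p.1 ∧ μ (frontier p.1) = 0) ∧ (IsOpen p.2 ∧ μ' (frontier p.2) = 0) := by
        intro p hp
        rw [List.mem_map] at hp
        obtain ⟨i, _, rfl⟩ := hp
        exact ⟨⟨hAo _, hAn _⟩, hBo _, hBn _⟩
      have ht : Tendsto (fun n => (μn n).prod (μ'n n) (V k)) atTop (𝓝 (μ.prod μ' (V k))) := by
        rw [hrect]
        exact tendsto_rectUnion μn μ'n μ μ' hA hB k _ (le_of_eq (by simp)) hprops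
      have hVsubG : V k ⊆ G := by
        rw [← hVUnion]; exact Set.subset_iUnion V k
      calc μ.prod μ' (V k) = atTop.liminf (fun n => (μn n).prod (μ'n n) (V k)) :=
              ht.liminf_eq.symm
        _ ≤ atTop.liminf (fun n => (μn n).prod (μ'n n) G) :=
              liminf_le_liminf (Eventually.of_forall fun n => measure_mono hVsubG)
    exact le_of_tendsto' hVtendsto hVle
  -- conclude weak convergence of the product probability measures
  let Q : ℕ → ProbabilityMeasure (S × S) := fun n => (P n).prod (P' n)
  let Ql : ProbabilityMeasure (S × S) := Pl.prod Pl'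
  have hQ : Tendsto Q atTop (𝓝 Ql) := by
    apply MeasureTheory.tendsto_of_forall_isOpen_le_liminf
    intro G hG
    have hENN := h_opens G hG
    have aux : ((atTop.liminf (fun n => Q n G) : ℝ≥0) : ℝ≥0∞) =
        atTop.liminf (fun n => ((Q n G : ℝ≥0) : ℝ≥0∞)) := by
      refine Monotone.map_liminf_of_continuousAt (F := atTop) ENNReal.coe_mono
        (fun n => Q n G) ENNReal.continuous_coe.continuousAt ?_ ?_
      · refine Filter.IsBoundedUnder.isCoboundedUnder_ge ⟨1, ?_⟩
        simp only [eventually_map, eventually_atTop]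
        exact ⟨0, fun n _ => ProbabilityMeasure.apply_le_one _ _⟩
      · exact ⟨0, by simp⟩
    rw [← ENNReal.coe_le_coe, aux]
    simp only [ProbabilityMeasure.ennreal_coeFn_eq_coeFn_toMeasure]
    exact hENN
  intro g
  have := ProbabilityMeasure.tendsto_iff_forall_integral_tendsto.mp hQ g
  exact this
end

section
/- Let S be a separable metric space, (m_n) a sequence of Borel probability measures on S converging weakly to m, and g : S → ℝ a bounded Borel function whose set of discontinuity points D(g) satisfies m(D(g)) = 0. Then ∫ g dm_n → ∫ g dm. -/
open Filter MeasureTheory BoundedContinuousFunction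

/-- Portmanteau-type theorem: if `mₙ → m` weakly and `g` is bounded, Borel and
`m`-almost everywhere continuous, then `∫ g dmₙ → ∫ g dm`. -/
theorem integral_tendsto_of_ae_continuous
    {S : Type*} [MetricSpace S] [TopologicalSpace.SeparableSpace S]
    [MeasurableSpace S] [BorelSpace S]
    (mn : ℕ → Measure S) (m : Measure S)
    [∀ n, IsProbabilityMeasure (mn n)] [IsProbabilityMeasure m]
    (hweak : ∀ f : S →ᵇ ℝ, Tendsto (fun n => ∫ x, f x ∂(mn n)) atTop (nhds (∫ x, f x ∂m)))
    (g : S → ℝ) (hmeas : Measurable g) (hbdd : ∃ C, ∀ x, |g x| ≤ C)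
    (hcont : m {x | ¬ ContinuousAt g x} = 0) :
    Tendsto (fun n => ∫ x, g x ∂(mn n)) atTop (nhds (∫ x, g x ∂m)) := by
  obtain ⟨C, hC⟩ := hbdd
  set C' : ℝ := |C| with hC'def
  have hC' : ∀ x, |g x| ≤ C' := fun x => (hC x).trans (le_abs_self C)
  set h : S → ℝ := fun x => g x + C' with hdef
  have h_nn : ∀ x, 0 ≤ h x := by
    intro x; have := (abs_le.mp (hC' x)).1; simp only [hdef]; linarith
  have h_le : ∀ x, h x ≤ 2 * C' := by
    intro x; have := (abs_le.mp (hC' x)).2; simp only [hdef]; linarith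
  have h_meas : Measurable h := hmeas.add_const _
  have hDh : ∀ x, ContinuousAt g x → ContinuousAt h x := by
    intro x hx
    exact hx.add continuousAt_const
  -- integrability of g and h
  have g_int : ∀ (μ : Measure S), IsProbabilityMeasure μ → Integrable g μ := by
    intro μ _
    exact (integrable_const C').mono' hmeas.aestronglyMeasurable
      (ae_of_all _ fun x => by simpa using hC' x)
  have h_int : ∀ (μ : Measure S), IsProbabilityMeasure μ → Integrable h μ := by
    intro μ hμ
    exact (g_int μ hμ).add (integrable_const _)
  -- weak convergence as ProbabilityMeasure convergence
  set μP : ProbabilityMeasure S := ⟨m, inferInstance⟩ with hμP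
  set μsP : ℕ → ProbabilityMeasure S := fun n => ⟨mn n, inferInstance⟩ with hμsP
  have htendP : Tendsto μsP atTop (nhds μP) :=
    ProbabilityMeasure.tendsto_iff_forall_integral_tendsto.mpr (fun f => hweak f)
  have htend : ∀ E : Set S, m (frontier E) = 0 →
      Tendsto (fun n => mn n E) atTop (nhds (m E)) := by
    intro E hE
    have hE' : (μP : Measure S) (frontier E) = 0 := hE
    exact ProbabilityMeasure.tendsto_measure_of_null_frontier_of_tendsto' htendP hE' 
  -- frontier of superlevel sets
  have hfront : ∀ t : ℝ, frontier {x | t < h x} ⊆ {x | h x = t} ∪ {x | ¬ ContinuousAt g x} := by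
    intro t x hx
    by_cases hc : ContinuousAt g x
    · left
      have hch : ContinuousAt h x := hDh x hc
      by_contra hne
      rcases lt_or_gt_of_ne hne with hlt | hgt
      · -- h x < t : x in interior of complement, contradicting x ∈ closure
        have hmem : {y | h y < t} ∈ nhds x := hch.preimage_mem_nhds (Iio_mem_nhds hlt)
        have : x ∈ interior {y : S | t < h y}ᶜ := by
          rw [mem_interior_iff_mem_nhds]
          filter_upwards [hmem] with y hy
          simp only [Set.mem_compl_iff, Set.mem_setOf_eq, not_lt]
          exact hy.le
        rw [interior_compl] at this
        exact this hx.1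
      · -- h x > t : x in interior, contradicting frontier
        have hmem : {y | t < h y} ∈ nhds x := hch.preimage_mem_nhds (Ioi_mem_nhds hgt)
        exact hx.2 (mem_interior_iff_mem_nhds.mpr hmem)
    · right; exact hc
  -- countable set of bad levels
  have hT : Set.Countable {t : ℝ | 0 < m {x | h x = t}} :=
    Measure.countable_meas_level_set_pos h_meas
  -- pointwise convergence of tail probabilities for good levels
  have hconv : ∀ t : ℝ, t ∉ {t : ℝ | 0 < m {x | h x = t}} →
      Tendsto (fun n => (mn n {x | t < h x}).toReal) atTop
        (nhds ((m {x | t < h x}).toReal)) := by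
    intro t ht
    have hlevel : m {x | h x = t} = 0 := by
      by_contra hne
      exact ht (pos_iff_ne_zero.mpr hne)
    have hnull : m (frontier {x | t < h x}) = 0 := by
      have : m (frontier {x | t < h x}) ≤ m ({x | h x = t} ∪ {x | ¬ ContinuousAt g x}) := measure_mono (hfront t)
      refine le_antisymm (this.trans ?_) zero_le
      refine le_trans (measure_union_le _ _) ?_
      rw [hlevel, hcont]; simp
    have := htend _ hnull
    exact (ENNReal.tendsto_toReal (measure_ne_top m _)).comp this
  -- the tail probability functions
  set F : ℕ → ℝ → ℝ := fun n t => (mn n {x | t < h x}).toReal with hFdef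
  set F0 : ℝ → ℝ := fun t => (m {x | t < h x}).toReal with hF0def
  have hF_anti : ∀ n, Antitone (F n) := by
    intro n s t hst
    exact ENNReal.toReal_mono (measure_ne_top _ _)
      (measure_mono fun x hx => lt_of_le_of_lt hst hx)
  have hF_meas : ∀ n, AEStronglyMeasurable (F n) ((volume : Measure ℝ).restrict (Set.Ioi 0)) :=
    fun n => ((hF_anti n).measurable).aestronglyMeasurable
  -- the dominating function
  set bound : ℝ → ℝ := Set.indicator (Set.Ioc 0 (2 * C')) (fun _ => (1:ℝ)) with hbound_def
  have hbound_int : Integrable bound ((volume : Measure ℝ).restrict (Set.Ioi 0)) := by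
    rw [hbound_def, integrable_indicator_iff measurableSet_Ioc]
    refine integrableOn_const (ne_of_lt ?_)
    calc ((volume : Measure ℝ).restrict (Set.Ioi 0)) (Set.Ioc 0 (2 * C'))
        ≤ volume (Set.Ioc 0 (2 * C')) := Measure.restrict_le_self _
      _ < ⊤ := measure_Ioc_lt_top
  have h_bound : ∀ n, ∀ᵐ t ∂((volume : Measure ℝ).restrict (Set.Ioi 0)),
      ‖F n t‖ ≤ bound t := by
    intro n
    filter_upwards [ae_restrict_mem measurableSet_Ioi] with t ht
    rw [Real.norm_eq_abs, abs_of_nonneg ENNReal.toReal_nonneg]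
    by_cases hcase : t ≤ 2 * C'
    · have : bound t = 1 := by
        rw [hbound_def, Set.indicator_of_mem (Set.mem_Ioc.mpr ⟨Set.mem_Ioi.mp ht, hcase⟩)]
      rw [this]
      calc (mn n {x | t < h x}).toReal ≤ (mn n Set.univ).toReal :=
            ENNReal.toReal_mono (measure_ne_top _ _) (measure_mono (Set.subset_univ _))
        _ = 1 := by simp
    · have hempty : {x | t < h x} = ∅ := by
        ext x; simp only [Set.mem_setOf_eq, Set.mem_empty_iff_false, iff_false, not_lt]
        exact (h_le x).trans (le_of_not_ge hcase)
      rw [hempty]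
      simp only [measure_empty, ENNReal.toReal_zero]
      exact Set.indicator_nonneg (fun _ _ => zero_le_one) t
  have h_lim : ∀ᵐ t ∂((volume : Measure ℝ).restrict (Set.Ioi 0)),
      Tendsto (fun n => F n t) atTop (nhds (F0 t)) := by
    have hnullT : ((volume : Measure ℝ).restrict (Set.Ioi 0))
        {t : ℝ | 0 < m {x | h x = t}} = 0 := by
      refine le_antisymm (le_trans (Measure.restrict_le_self _) ?_) zero_le
      rw [hT.measure_zero]
    filter_upwards [measure_eq_zero_iff_ae_notMem.mp hnullT] with t ht
    exact hconv t ht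
  -- dominated convergence
  have key : Tendsto (fun n => ∫ t in Set.Ioi (0:ℝ), F n t) atTop
      (nhds (∫ t in Set.Ioi (0:ℝ), F0 t)) :=
    tendsto_integral_of_dominated_convergence bound hF_meas hbound_int h_bound h_lim
  -- layer cake on both sides
  have hlc : ∀ (μ : Measure S), IsProbabilityMeasure μ →
      ∫ x, h x ∂μ = ∫ t in Set.Ioi (0:ℝ), (μ {x | t < h x}).toReal := by
    intro μ hμ
    exact (h_int μ hμ).integral_eq_integral_meas_lt (ae_of_all _ h_nn)
  have keyh : Tendsto (fun n => ∫ x, h x ∂(mn n)) atTop (nhds (∫ x, h x ∂m)) := by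
    rw [hlc m inferInstance]
    have : (fun n => ∫ x, h x ∂(mn n)) = fun n => ∫ t in Set.Ioi (0:ℝ), F n t := by
      funext n; rw [hlc (mn n) inferInstance]
    rw [this]
    exact key
  -- relate ∫ g and ∫ h
  have hgh : ∀ (μ : Measure S), IsProbabilityMeasure μ →
      ∫ x, g x ∂μ = (∫ x, h x ∂μ) - C' := by
    intro μ hμ
    have : ∫ x, h x ∂μ = (∫ x, g x ∂μ) + C' := by
      rw [hdef]
      rw [integral_add (g_int μ hμ) (integrable_const _)]
      simp
    linarith
  have : (fun n => ∫ x, g x ∂(mn n)) = fun n => (∫ x, h x ∂(mn n)) - C' := by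
    funext n; exact hgh (mn n) inferInstance
  rw [this, hgh m inferInstance]
  exact keyh.sub_const C'
end

section
/- If (Y_j)_{j≥1} and (Y'_j)_{j≥1} are two families of random variables such that (Y_j) is independent of (Y'_j) (as sequences) and both families {|Y_j|} and {|Y'_j|} are uniformly integrable, then the family {|Y_j Y'_j|}_{j≥1} is uniformly integrable. -/
open MeasureTheory ProbabilityTheory

lemma aux_ui_bound {Ω : Type*} [m0 : MeasurableSpace Ω] {μ : Measure Ω} [IsProbabilityMeasure μ]
    (Z : ℕ → Ω → ℝ) (hZ : ∀ j, Measurable (Z j))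
    (hUI : ∀ ε > 0, ∃ K : ℝ, ∀ j,
      ∫⁻ ω in {ω | K < |Z j ω|}, ENNReal.ofReal |Z j ω| ∂μ ≤ ENNReal.ofReal ε) :
    ∃ C : ℝ, 0 ≤ C ∧ ∀ j, ∫⁻ ω, ENNReal.ofReal |Z j ω| ∂μ ≤ ENNReal.ofReal C := by
  obtain ⟨K, hK⟩ := hUI 1 one_pos
  refine ⟨max K 0 + 1, by positivity, fun j => ?_⟩
  have hs : MeasurableSet {ω | K < |Z j ω|} := measurableSet_lt measurable_const (hZ j).abs
  rw [← lintegral_add_compl (fun ω => ENNReal.ofReal |Z j ω|) hs]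
  have h2 : ∫⁻ ω in {ω | K < |Z j ω|}ᶜ, ENNReal.ofReal |Z j ω| ∂μ ≤ ENNReal.ofReal (max K 0) := by
    calc ∫⁻ ω in {ω | K < |Z j ω|}ᶜ, ENNReal.ofReal |Z j ω| ∂μ
        ≤ ∫⁻ _ω in {ω | K < |Z j ω|}ᶜ, ENNReal.ofReal (max K 0) ∂μ := by
          refine setLIntegral_mono measurable_const fun ω hω => ?_
          exact ENNReal.ofReal_le_ofReal (le_max_of_le_left (not_lt.1 hω))
      _ ≤ ENNReal.ofReal (max K 0) := by
          rw [setLIntegral_const]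
          exact mul_le_of_le_one_right zero_le prob_le_one
  calc _ ≤ ENNReal.ofReal 1 + ENNReal.ofReal (max K 0) := add_le_add (hK j) h2
    _ = ENNReal.ofReal (max K 0 + 1) := by
        rw [← ENNReal.ofReal_add (by norm_num) (le_max_right _ _), add_comm]

lemma aux_meas {Ω : Type*} (m : MeasurableSpace Ω) (f : Ω → ℝ) (hf : Measurable[m] f)
    (c : ℝ) :
    MeasurableSet[m] {ω | c < |f ω|} ∧
    Measurable[m] ({ω | c < |f ω|}.indicator (fun ω => ENNReal.ofReal |f ω|)) ∧
    Measurable[m] (fun ω => ENNReal.ofReal |f ω|) := by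
  have hs : MeasurableSet[m] {ω | c < |f ω|} := hf.abs measurableSet_Ioi
  exact ⟨hs, (hf.abs.ennreal_ofReal).indicator hs, hf.abs.ennreal_ofReal⟩

/-- If the sequence `(Y_j)` is independent of `(Y'_j)` and both families are
uniformly integrable, then the family of products `(Y_j Y'_j)` is uniformly
integrable. -/
theorem unifIntegrable_prod_of_indep
    {Ω : Type*} [m0 : MeasurableSpace Ω] {μ : Measure Ω} [IsProbabilityMeasure μ]
    (Y Y' : ℕ → Ω → ℝ)
    (hYmeas : ∀ j, Measurable (Y j)) (hY'meas : ∀ j, Measurable (Y' j))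
    (hYint : ∀ j, Integrable (Y j) μ) (hY'int : ∀ j, Integrable (Y' j) μ)
    (hindep : Indep (⨆ j, MeasurableSpace.comap (Y j) inferInstance)
                    (⨆ j, MeasurableSpace.comap (Y' j) inferInstance) μ)
    (hYUI : ∀ ε > 0, ∃ K : ℝ, ∀ j,
      ∫⁻ ω in {ω | K < |Y j ω|}, ENNReal.ofReal |Y j ω| ∂μ ≤ ENNReal.ofReal ε)
    (hY'UI : ∀ ε > 0, ∃ K : ℝ, ∀ j,
      ∫⁻ ω in {ω | K < |Y' j ω|}, ENNReal.ofReal |Y' j ω| ∂μ ≤ ENNReal.ofReal ε) :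
    ∀ ε > 0, ∃ K : ℝ, ∀ j,
      ∫⁻ ω in {ω | K < |Y j ω * Y' j ω|}, ENNReal.ofReal |Y j ω * Y' j ω| ∂μ
        ≤ ENNReal.ofReal ε := by
  obtain ⟨C, hC0, hC⟩ := aux_ui_bound Y hYmeas hYUI
  obtain ⟨C', hC'0, hC'⟩ := aux_ui_bound Y' hY'meas hY'UI
  -- notation for the two sub-σ-algebras
  set MY : MeasurableSpace Ω := ⨆ j, MeasurableSpace.comap (Y j) inferInstance with hMY
  set MY' : MeasurableSpace Ω := ⨆ j, MeasurableSpace.comap (Y' j) inferInstance with hMY'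
  have hMYle : MY ≤ m0 := iSup_le fun j => measurable_iff_comap_le.1 (hYmeas j)
  have hMY'le : MY' ≤ m0 := iSup_le fun j => measurable_iff_comap_le.1 (hY'meas j)
  have hYmeasM : ∀ j, Measurable[MY] (Y j) := fun j =>
    (Measurable.of_comap_le le_rfl).mono (le_iSup (fun j => MeasurableSpace.comap (Y j) inferInstance) j) le_rfl
  have hY'measM : ∀ j, Measurable[MY'] (Y' j) := fun j =>
    (Measurable.of_comap_le le_rfl).mono (le_iSup (fun j => MeasurableSpace.comap (Y' j) inferInstance) j) le_rfl
  intro ε hε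
  have hδpos : 0 < ε / (2 * (C' + 1)) := by positivity
  have hδ'pos : 0 < ε / (2 * (C + 1)) := by positivity
  obtain ⟨A, hA⟩ := hYUI _ hδpos
  obtain ⟨B, hB⟩ := hY'UI _ hδ'pos
  set A' := max A 0 with hA'def
  set B' := max B 0 with hB'def
  refine ⟨A' * B', fun j => ?_⟩
  have hsubset : {ω | A' * B' < |Y j ω * Y' j ω|} ⊆
      {ω | A' < |Y j ω|} ∪ {ω | B' < |Y' j ω|} := by
    intro ω hω
    rw [Set.mem_union]
    by_contra h
    rw [not_or] at h
    simp only [Set.mem_setOf_eq, not_lt] at h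
    obtain ⟨h1, h2⟩ := h
    have : |Y j ω * Y' j ω| ≤ A' * B' := by
      rw [abs_mul]
      exact mul_le_mul h1 h2 (abs_nonneg _) (le_max_right A 0)
    exact absurd hω (not_lt.2 this)
  have habs : ∀ ω, ENNReal.ofReal |Y j ω * Y' j ω|
      = ENNReal.ofReal |Y j ω| * ENNReal.ofReal |Y' j ω| := by
    intro ω
    rw [abs_mul, ENNReal.ofReal_mul (abs_nonneg _)]
  obtain ⟨hsA, hfA, hgA⟩ := aux_meas MY (Y j) (hYmeasM j) A'
  obtain ⟨hsB, hfB, hgB⟩ := aux_meas MY' (Y' j) (hY'measM j) B'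
  -- Term 1 : integral over {A' < |Y j|}
  have hterm1 : ∫⁻ ω in {ω | A' < |Y j ω|}, ENNReal.ofReal |Y j ω * Y' j ω| ∂μ
      ≤ ENNReal.ofReal (ε / (2 * (C' + 1))) * ENNReal.ofReal C' := by
    have key : ∫⁻ ω in {ω | A' < |Y j ω|}, ENNReal.ofReal |Y j ω * Y' j ω| ∂μ
        = (∫⁻ ω in {ω | A' < |Y j ω|}, ENNReal.ofReal |Y j ω| ∂μ)
          * ∫⁻ ω, ENNReal.ofReal |Y' j ω| ∂μ := by
      rw [← lintegral_indicator (hMYle _ hsA), ← lintegral_indicator (hMYle _ hsA)]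
      have heq : ∀ ω, {ω | A' < |Y j ω|}.indicator
          (fun ω => ENNReal.ofReal |Y j ω * Y' j ω|) ω
          = ({ω | A' < |Y j ω|}.indicator (fun ω => ENNReal.ofReal |Y j ω|) ω)
            * ENNReal.ofReal |Y' j ω| := by
        intro ω
        by_cases hω : ω ∈ {ω | A' < |Y j ω|}
        · simp [Set.indicator_of_mem hω, habs ω]
        · simp [Set.indicator_of_notMem hω]
      simp_rw [heq]
      exact lintegral_mul_eq_lintegral_mul_lintegral_of_independent_measurableSpace
        hMYle hMY'le hindep
        hfA hgB
    rw [key]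
    refine mul_le_mul' ?_ (hC' j)
    calc ∫⁻ ω in {ω | A' < |Y j ω|}, ENNReal.ofReal |Y j ω| ∂μ
        ≤ ∫⁻ ω in {ω | A < |Y j ω|}, ENNReal.ofReal |Y j ω| ∂μ :=
          lintegral_mono_set (fun ω hω => lt_of_le_of_lt (le_max_left A 0) hω)
      _ ≤ _ := hA j
  -- Term 2 : integral over {B' < |Y' j|}
  have hterm2 : ∫⁻ ω in {ω | B' < |Y' j ω|}, ENNReal.ofReal |Y j ω * Y' j ω| ∂μ
      ≤ ENNReal.ofReal C * ENNReal.ofReal (ε / (2 * (C + 1))) := by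
    have key : ∫⁻ ω in {ω | B' < |Y' j ω|}, ENNReal.ofReal |Y j ω * Y' j ω| ∂μ
        = (∫⁻ ω, ENNReal.ofReal |Y j ω| ∂μ)
          * ∫⁻ ω in {ω | B' < |Y' j ω|}, ENNReal.ofReal |Y' j ω| ∂μ := by
      rw [← lintegral_indicator (hMY'le _ hsB), ← lintegral_indicator (hMY'le _ hsB)]
      have heq : ∀ ω, {ω | B' < |Y' j ω|}.indicator
          (fun ω => ENNReal.ofReal |Y j ω * Y' j ω|) ω
          = ENNReal.ofReal |Y j ω|
            * ({ω | B' < |Y' j ω|}.indicator (fun ω => ENNReal.ofReal |Y' j ω|) ω) := by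
        intro ω
        by_cases hω : ω ∈ {ω | B' < |Y' j ω|}
        · simp [Set.indicator_of_mem hω, habs ω]
        · simp [Set.indicator_of_notMem hω]
      simp_rw [heq]
      exact lintegral_mul_eq_lintegral_mul_lintegral_of_independent_measurableSpace
        hMYle hMY'le hindep
        hgA hfB
    rw [key]
    refine mul_le_mul' (hC j) ?_
    calc ∫⁻ ω in {ω | B' < |Y' j ω|}, ENNReal.ofReal |Y' j ω| ∂μ
        ≤ ∫⁻ ω in {ω | B < |Y' j ω|}, ENNReal.ofReal |Y' j ω| ∂μ :=
          lintegral_mono_set (fun ω hω => lt_of_le_of_lt (le_max_left B 0) hω)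
      _ ≤ _ := hB j
  -- combine
  have hhalf1 : ENNReal.ofReal (ε / (2 * (C' + 1))) * ENNReal.ofReal C'
      ≤ ENNReal.ofReal (ε / 2) := by
    rw [← ENNReal.ofReal_mul (le_of_lt hδpos)]
    apply ENNReal.ofReal_le_ofReal
    rw [div_mul_eq_mul_div, div_le_div_iff₀ (by positivity) two_pos]
    nlinarith
  have hhalf2 : ENNReal.ofReal C * ENNReal.ofReal (ε / (2 * (C + 1)))
      ≤ ENNReal.ofReal (ε / 2) := by
    rw [← ENNReal.ofReal_mul hC0]
    apply ENNReal.ofReal_le_ofReal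
    rw [mul_div_assoc', div_le_div_iff₀ (by positivity) two_pos]
    nlinarith
  calc ∫⁻ ω in {ω | A' * B' < |Y j ω * Y' j ω|}, ENNReal.ofReal |Y j ω * Y' j ω| ∂μ
      ≤ ∫⁻ ω in {ω | A' < |Y j ω|} ∪ {ω | B' < |Y' j ω|},
          ENNReal.ofReal |Y j ω * Y' j ω| ∂μ := lintegral_mono_set hsubset
    _ ≤ (∫⁻ ω in {ω | A' < |Y j ω|}, ENNReal.ofReal |Y j ω * Y' j ω| ∂μ)
        + ∫⁻ ω in {ω | B' < |Y' j ω|}, ENNReal.ofReal |Y j ω * Y' j ω| ∂μ :=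
          lintegral_union_le _ _ _
    _ ≤ ENNReal.ofReal (ε / 2) + ENNReal.ofReal (ε / 2) :=
          add_le_add (le_trans hterm1 hhalf1) (le_trans hterm2 hhalf2)
    _ = ENNReal.ofReal ε := by
          rw [← ENNReal.ofReal_add (by positivity) (by positivity)]
          ring_nf
end
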